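/- Let d, d', r be positive integers with r ≤ min(d, d'). There exist matrices U_1, …, U_{N₁} ∈ ℝ^{d×r} and V_1, …, V_{N₂} ∈ ℝ^{d'×r} with N₁ = ⌊17^{d·r}⌋, N₂ = ⌊17^{d'·r}⌋, ‖U_j‖₂ ≤ 1 and ‖V_{j'}‖₂ ≤ 1 for all j, j', such that for every real normed vector space F and every linear map f : ℝ^{d×d'} → F, one has sup{ ‖f(M)‖ : M ∈ ℝ^{d×d'}, ‖M‖₂ ≤ 1, rank(M) ≤ r } ≤ 2 · max_{j ≤ N₁, j' ≤ N₂} ‖f(U_j V_{j'}ᵀ)‖. (Lemma B.1(ii) of the paper, the right-hand inequality of display (B.1): a (1/8)-net of rank-one products controls the supremum of ‖f‖ over the low-rank unit spectral-norm ball up to a factor 2.) -/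

import Mathlib

open scoped Matrix Matrix.Norms.L2Operator

open Metric MeasureTheory Module

section Aux

private lemma card_le_of_separated' {E : Type} [NormedAddCommGroup E] [NormedSpace ℝ E]
    [FiniteDimensional ℝ E] [Nontrivial E] [MeasurableSpace E] [BorelSpace E]
    (T : Finset E) (hT : ∀ x ∈ T, ‖x‖ ≤ 1)
    (hsep : (T : Set E).Pairwise fun a b => 1/8 < dist a b) :
    T.card ≤ 17 ^ (finrank ℝ E) := by
  set n := finrank ℝ E
  set μ := (Module.finBasis ℝ E).addHaar with hμ
  have hdisj : (T : Set E).PairwiseDisjoint fun x => ball x (1/16 : ℝ) := by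
    intro a ha b hb hab
    exact ball_disjoint_ball (by have := hsep ha hb hab; linarith)
  have hsub : ∀ x ∈ T, ball x (1/16 : ℝ) ⊆ ball (0 : E) (17/16) := by
    intro x hx z hz
    rw [mem_ball] at hz ⊢
    have h1 : dist z 0 ≤ dist z x + dist x 0 := dist_triangle _ _ _
    have h2 : dist x 0 ≤ 1 := by rw [dist_zero_right]; exact hT x hx
    linarith
  have hsum : ∑ x ∈ T, μ (ball x (1/16 : ℝ)) ≤ μ (ball (0 : E) (17/16)) := by
    rw [← measure_biUnion_finset hdisj (fun x _ => measurableSet_ball)]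
    exact measure_mono (Set.iUnion₂_subset hsub)
  have hball : ∀ x : E, μ (ball x (1/16 : ℝ)) =
      ENNReal.ofReal ((1/16 : ℝ) ^ n) * μ (ball 0 1) := fun x =>
    Measure.addHaar_ball μ x (by norm_num)
  have hball' : μ (ball (0 : E) (17/16 : ℝ)) =
      ENNReal.ofReal ((17/16 : ℝ) ^ n) * μ (ball 0 1) :=
    Measure.addHaar_ball μ 0 (by norm_num)
  simp only [hball, Finset.sum_const, nsmul_eq_mul, hball'] at hsum
  have hB0 : μ (ball (0 : E) 1) ≠ 0 := (measure_ball_pos μ 0 (by norm_num)).ne'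
  have hBt : μ (ball (0 : E) 1) ≠ ⊤ := measure_ball_lt_top.ne
  have h17 : ENNReal.ofReal ((17/16 : ℝ) ^ n) =
      (17 ^ n : ℕ) * ENNReal.ofReal ((1/16 : ℝ) ^ n) := by
    rw [← ENNReal.ofReal_natCast, ← ENNReal.ofReal_mul (by positivity)]
    congr 1
    push_cast
    rw [← mul_pow]
    norm_num
  rw [h17] at hsum
  have hc0 : ENNReal.ofReal ((1/16 : ℝ) ^ n) * μ (ball (0 : E) 1) ≠ 0 := by
    simp only [ne_eq, mul_eq_zero, not_or]
    refine ⟨?_, hB0⟩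
    simp only [ne_eq, ENNReal.ofReal_eq_zero, not_le]
    positivity
  have hct : ENNReal.ofReal ((1/16 : ℝ) ^ n) * μ (ball (0 : E) 1) ≠ ⊤ :=
    ENNReal.mul_ne_top ENNReal.ofReal_ne_top hBt
  rw [mul_assoc] at hsum
  exact_mod_cast (ENNReal.mul_le_mul_iff_left hc0 hct).mp hsum

private lemma exists_net' (E : Type) [NormedAddCommGroup E] [NormedSpace ℝ E]
    [FiniteDimensional ℝ E] [Nontrivial E] :
    ∃ T : Finset E, T.card ≤ 17 ^ (finrank ℝ E) ∧ (∀ x ∈ T, ‖x‖ ≤ 1) ∧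
      ∀ x : E, ‖x‖ ≤ 1 → ∃ y ∈ T, ‖x - y‖ ≤ 1/8 := by
  classical
  letI : MeasurableSpace E := borel E
  haveI : BorelSpace E := ⟨rfl⟩
  set P : ℕ → Prop := fun m => ∃ T : Finset E, (∀ x ∈ T, ‖x‖ ≤ 1) ∧
    ((T : Set E).Pairwise fun a b => 1/8 < dist a b) ∧ T.card = m with hP
  have hP0 : P 0 := ⟨∅, by simp, by simp, rfl⟩
  have hPN : P (Nat.findGreatest P (17 ^ finrank ℝ E)) :=
    Nat.findGreatest_spec (Nat.zero_le _) hP0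
  obtain ⟨T, hT1, hTsep, hTcard⟩ := hPN
  refine ⟨T, ?_, hT1, ?_⟩
  · have := card_le_of_separated' T hT1 hTsep; omega
  · intro x hx
    by_contra hcon
    push_neg at hcon
    have hxT : x ∉ T := fun hxT => by
      have := hcon x hxT; simp at this; linarith
    have hsep' : ((insert x T : Finset E) : Set E).Pairwise fun a b => 1/8 < dist a b := by
      rw [Finset.coe_insert]
      haveI : Std.Symm (fun a b : E => 1/8 < dist a b) := ⟨fun a b h => by rwa [dist_comm]⟩
      rw [Set.pairwise_insert_of_symm]
      refine ⟨hTsep, fun b hb _ => ?_⟩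
      rw [dist_eq_norm]
      exact hcon b hb
    have hT1' : ∀ z ∈ insert x T, ‖z‖ ≤ 1 := by
      intro z hz
      rcases Finset.mem_insert.mp hz with rfl | hz
      · exact hx
      · exact hT1 z hz
    have hcard' := card_le_of_separated' (insert x T) hT1' hsep'
    rw [Finset.card_insert_of_notMem hxT, hTcard] at hcard'
    have hP' : P (Nat.findGreatest P (17 ^ finrank ℝ E) + 1) := ⟨insert x T, hT1', hsep',
      by rw [Finset.card_insert_of_notMem hxT, hTcard]⟩
    have := Nat.le_findGreatest hcard' hP'
    omega

private lemma exists_decomp' {d d' r : ℕ} (M : Matrix (Fin d) (Fin d') ℝ)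
    (hM : ‖M‖ ≤ 1) (hrank : M.rank ≤ r) :
    ∃ (A : Matrix (Fin d) (Fin r) ℝ) (B : Matrix (Fin d') (Fin r) ℝ),
      ‖A‖ ≤ 1 ∧ ‖B‖ ≤ 1 ∧ M = A * Bᵀ := by
  classical
  set e := WithLp.linearEquiv 2 ℝ (Fin d → ℝ) with he
  set W : Submodule ℝ (EuclideanSpace ℝ (Fin d)) :=
    (Submodule.span ℝ (Set.range Mᵀ)).map
      (e.symm : (Fin d → ℝ) →ₗ[ℝ] EuclideanSpace ℝ (Fin d)) with hWdef
  have hWrank : finrank ℝ W ≤ r := by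
    rw [hWdef, LinearEquiv.finrank_map_eq]
    show finrank ℝ (Submodule.span ℝ (Set.range M.col)) ≤ r
    rw [← Matrix.rank_eq_finrank_span_cols]
    exact hrank
  set k := finrank ℝ W with hk
  set b := stdOrthonormalBasis ℝ W with hb
  set u : Fin r → EuclideanSpace ℝ (Fin d) :=
    fun i => if h : (i : ℕ) < k then (b ⟨i, h⟩ : EuclideanSpace ℝ (Fin d)) else 0 with hu
  set uu : Fin r → (Fin d → ℝ) := fun i => e (u i) with huu
  have hbE : ∀ p q : Fin k, (inner ℝ (b p : EuclideanSpace ℝ (Fin d)) (b q : EuclideanSpace ℝ (Fin d)) : ℝ) =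
      if p = q then (1:ℝ) else 0 := by
    intro p q
    rw [← Submodule.coe_inner]
    exact orthonormal_iff_ite.mp b.orthonormal p q
  have hinner : ∀ i j : Fin r, (∑ t, uu i t * uu j t) =
      if i = j ∧ (i : ℕ) < k then (1:ℝ) else 0 := by
    intro i j
    have hsum : (∑ t, uu i t * uu j t) = (inner ℝ (u i) (u j) : ℝ) := by
      rw [PiLp.inner_apply]
      show _ = ∑ t, (inner ℝ (uu i t) (uu j t) : ℝ)
      refine Finset.sum_congr rfl fun t _ => ?_
      simp only [RCLike.inner_apply, conj_trivial]
      ring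
    rw [hsum, hu]
    by_cases hi : (i : ℕ) < k
    · by_cases hj : (j : ℕ) < k
      · simp only [dif_pos hi, dif_pos hj, hbE]
        by_cases hij : i = j
        · subst hij; simp [hi]
        · have : (⟨(i:ℕ), hi⟩ : Fin k) ≠ ⟨(j:ℕ), hj⟩ := by
            simp only [ne_eq, Fin.mk.injEq]
            exact fun h => hij (Fin.ext h)
          simp [this, hij]
      · have hij : i ≠ j := fun h => hj (h ▸ hi)
        simp [dif_neg hj, hij]
    · simp [dif_neg hi, hi]
  set A : Matrix (Fin d) (Fin r) ℝ := Matrix.of (fun t i => uu i t) with hA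
  set w : Fin r → ℝ := fun i => if (i : ℕ) < k then 1 else 0 with hw
  have hAtA : Aᵀ * A = Matrix.diagonal w := by
    ext i j
    simp only [Matrix.mul_apply, Matrix.transpose_apply, hA, Matrix.of_apply,
      Matrix.diagonal]
    rw [hinner i j]
    by_cases hij : i = j
    · subst hij; simp [hw]
    · simp [hij]
  have hAconj : Aᴴ = Aᵀ := Matrix.conjTranspose_eq_transpose_of_trivial A
  have hDnorm : ‖(Matrix.diagonal w : Matrix (Fin r) (Fin r) ℝ)‖ ≤ 1 := by
    set D : Matrix (Fin r) (Fin r) ℝ := Matrix.diagonal w with hD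
    have hww : ∀ i : Fin r, w i * w i = w i := by
      intro i
      rw [hw]
      by_cases hi : (i : ℕ) < k <;> simp [hi]
    have hDD : D * D = D := by
      rw [hD, Matrix.diagonal_mul_diagonal,
        show (fun i => w i * w i) = w from funext hww]
    have hDs : Dᴴ = D := by
      rw [Matrix.conjTranspose_eq_transpose_of_trivial, hD, Matrix.diagonal_transpose]
    have h1 : ‖D‖ * ‖D‖ = ‖D‖ := by
      rw [← Matrix.l2_opNorm_conjTranspose_mul_self D, hDs, hDD]
    nlinarith [norm_nonneg D]
  have hA1 : ‖A‖ ≤ 1 := by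
    have h2 : ‖A‖ * ‖A‖ ≤ 1 := by
      rw [← Matrix.l2_opNorm_conjTranspose_mul_self A, hAconj, hAtA]
      exact hDnorm
    nlinarith [norm_nonneg A]
  refine ⟨A, Mᵀ * A, hA1, ?_, ?_⟩
  · have hBt : (Mᵀ * A)ᵀ = Aᵀ * M := by
      rw [Matrix.transpose_mul, Matrix.transpose_transpose]
    have h3 : ‖Mᵀ * A‖ = ‖Aᵀ * M‖ := by
      rw [← Matrix.l2_opNorm_conjTranspose (Mᵀ * A),
        Matrix.conjTranspose_eq_transpose_of_trivial, hBt]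
    rw [h3]
    calc ‖Aᵀ * M‖ ≤ ‖Aᵀ‖ * ‖M‖ := Matrix.l2_opNorm_mul _ _
    _ ≤ 1 * 1 := by
        apply mul_le_mul _ hM (norm_nonneg M) zero_le_one
        rw [← hAconj, Matrix.l2_opNorm_conjTranspose]
        exact hA1
    _ = 1 := mul_one 1
  · have hBt : (Mᵀ * A)ᵀ = Aᵀ * M := by
      rw [Matrix.transpose_mul, Matrix.transpose_transpose]
    rw [hBt, ← Matrix.mul_assoc]
    have hgen : ∀ i : Fin r, (A * Aᵀ) *ᵥ uu i = uu i := by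
      intro i
      rw [← Matrix.mulVec_mulVec]
      by_cases hi : (i : ℕ) < k
      · have h2 : Aᵀ *ᵥ uu i = fun l => if l = i then (1:ℝ) else 0 := by
          funext l
          simp only [Matrix.mulVec, dotProduct, Matrix.transpose_apply, hA,
            Matrix.of_apply]
          rw [hinner l i]
          by_cases hli : l = i
          · subst hli; simp [hi]
          · simp [hli]
        rw [h2]
        funext t
        simp [Matrix.mulVec, dotProduct, hA, Matrix.of_apply, mul_ite,
          mul_one, mul_zero]
      · have h0 : uu i = 0 := by
          rw [huu, hu]
          simp [dif_neg hi]
        rw [h0, Matrix.mulVec_zero, Matrix.mulVec_zero]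
    have hspan : ∀ v ∈ Submodule.span ℝ (Set.range uu), (A * Aᵀ) *ᵥ v = v := by
      intro v hv
      induction hv using Submodule.span_induction with
      | mem x hx => obtain ⟨i, rfl⟩ := hx; exact hgen i
      | zero => exact Matrix.mulVec_zero _
      | add x y _ _ hx hy => rw [Matrix.mulVec_add, hx, hy]
      | smul c x _ hx => rw [Matrix.mulVec_smul, hx]
    have hWle : W ≤ Submodule.span ℝ (Set.range u) := by
      have h1 : Set.range (fun p : Fin k => (b p : EuclideanSpace ℝ (Fin d))) =
          W.subtype '' Set.range b := by
        rw [← Set.range_comp]; rfl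
      have h2 : Submodule.span ℝ
          (Set.range (fun p : Fin k => (b p : EuclideanSpace ℝ (Fin d)))) = W := by
        rw [h1, Submodule.span_image, ← b.coe_toBasis, b.toBasis.span_eq, Submodule.map_top,
          Submodule.range_subtype]
      rw [← h2]
      apply Submodule.span_mono
      rintro x ⟨p, rfl⟩
      refine ⟨⟨(p : ℕ), lt_of_lt_of_le p.2 hWrank⟩, ?_⟩
      rw [hu]
      simp only [Fin.is_lt, dif_pos p.2]
      congr
    have hcol : ∀ j : Fin d', (fun l => M l j) ∈ Submodule.span ℝ (Set.range uu) := by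
      intro j
      have hWmem : e.symm (Mᵀ j) ∈ W := by
        rw [hWdef]
        exact Submodule.mem_map_of_mem (Submodule.subset_span ⟨j, rfl⟩)
      have hle := hWle hWmem
      have hmap : e (e.symm (Mᵀ j)) ∈
          Submodule.map (e : EuclideanSpace ℝ (Fin d) →ₗ[ℝ] (Fin d → ℝ))
          (Submodule.span ℝ (Set.range u)) := Submodule.mem_map_of_mem hle
      rw [Submodule.map_span, ← Set.range_comp] at hmap
      rw [LinearEquiv.apply_symm_apply] at hmap
      exact hmap
    ext i j
    have := congrFun (hspan _ (hcol j)) i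
    simp only [Matrix.mulVec, dotProduct] at this
    rw [Matrix.mul_apply]
    exact this.symm

end Aux

/-- **Lemma B.1(ii), right-hand inequality of display (B.1)**: a `(1/8)`-net of rank-one
products `U_j V_{j'}ᵀ` (with `‖U_j‖₂ ≤ 1`, `‖V_{j'}‖₂ ≤ 1`, `N₁ = 17^{d r}`,
`N₂ = 17^{d' r}`) controls, for every real normed space `F` and every linear map
`f : ℝ^{d×d'} → F`, the supremum of `‖f‖` over the set of matrices with spectral norm
at most `1` and rank at most `r`, up to a factor `2`:
`sup { ‖f M‖ : ‖M‖₂ ≤ 1, rank M ≤ r } ≤ 2 · max_{j,j'} ‖f (U_j V_{j'}ᵀ)‖`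
(stated equivalently, since the maximum over the finite nonempty family is attained, as:
for every such `M` there are `j, j'` with `‖f M‖ ≤ 2 ‖f (U_j V_{j'}ᵀ)‖`).
Here `‖·‖` on matrices is the `ℓ²→ℓ²` operator (spectral) norm. -/
theorem stmt_3 (d d' r : ℕ) (hr : 1 ≤ r) (hrd : r ≤ min d d') :
    ∃ (U : Fin (17 ^ (d * r)) → Matrix (Fin d) (Fin r) ℝ)
      (V : Fin (17 ^ (d' * r)) → Matrix (Fin d') (Fin r) ℝ),
      (∀ j, ‖U j‖ ≤ 1) ∧ (∀ j', ‖V j'‖ ≤ 1) ∧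
      ∀ (F : Type) (_ : NormedAddCommGroup F) (_ : NormedSpace ℝ F)
        (f : Matrix (Fin d) (Fin d') ℝ →ₗ[ℝ] F)
        (M : Matrix (Fin d) (Fin d') ℝ), ‖M‖ ≤ 1 → M.rank ≤ r →
          ∃ j j', ‖f M‖ ≤ 2 * ‖f (U j * (V j')ᵀ)‖ := by
  classical
  have hd : 1 ≤ d := hr.trans (hrd.trans (min_le_left _ _))
  have hd' : 1 ≤ d' := hr.trans (hrd.trans (min_le_right _ _))
  haveI : Nonempty (Fin d) := ⟨⟨0, hd⟩⟩
  haveI : Nonempty (Fin d') := ⟨⟨0, hd'⟩⟩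
  haveI : Nonempty (Fin r) := ⟨⟨0, hr⟩⟩
  haveI hX : Nontrivial (Matrix (Fin d) (Fin r) ℝ) := by
    refine ⟨0, Matrix.of fun _ _ => 1, fun h => ?_⟩
    have := congrFun (congrFun h ⟨0, hd⟩) ⟨0, hr⟩
    simpa using this
  haveI hY : Nontrivial (Matrix (Fin d') (Fin r) ℝ) := by
    refine ⟨0, Matrix.of fun _ _ => 1, fun h => ?_⟩
    have := congrFun (congrFun h ⟨0, hd'⟩) ⟨0, hr⟩
    simpa using this
  have hfrX : finrank ℝ (Matrix (Fin d) (Fin r) ℝ) = d * r := by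
    rw [Module.finrank_matrix]
    simp
  have hfrY : finrank ℝ (Matrix (Fin d') (Fin r) ℝ) = d' * r := by
    rw [Module.finrank_matrix]
    simp
  obtain ⟨TX, hTXcard, hTX1, hTXnet⟩ := exists_net' (Matrix (Fin d) (Fin r) ℝ)
  obtain ⟨TY, hTYcard, hTY1, hTYnet⟩ := exists_net' (Matrix (Fin d') (Fin r) ℝ)
  rw [hfrX] at hTXcard
  rw [hfrY] at hTYcard
  set U : Fin (17 ^ (d * r)) → Matrix (Fin d) (Fin r) ℝ :=
    fun i => TX.toList.getD i 0 with hU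
  set V : Fin (17 ^ (d' * r)) → Matrix (Fin d') (Fin r) ℝ :=
    fun i => TY.toList.getD i 0 with hV
  have hUnorm : ∀ j, ‖U j‖ ≤ 1 := by
    intro j
    simp only [hU]
    by_cases h : (j : ℕ) < TX.toList.length
    · rw [List.getD_eq_getElem _ _ h]
      exact hTX1 _ (by rw [← Finset.mem_toList]; exact List.getElem_mem h)
    · rw [List.getD_eq_default _ _ (le_of_not_gt h)]
      simp
  have hVnorm : ∀ j, ‖V j‖ ≤ 1 := by
    intro j
    simp only [hV]
    by_cases h : (j : ℕ) < TY.toList.length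
    · rw [List.getD_eq_getElem _ _ h]
      exact hTY1 _ (by rw [← Finset.mem_toList]; exact List.getElem_mem h)
    · rw [List.getD_eq_default _ _ (le_of_not_gt h)]
      simp
  have hUcov : ∀ y ∈ TX, ∃ j, U j = y := by
    intro y hy
    rw [← Finset.mem_toList] at hy
    obtain ⟨m, hm, hmy⟩ := List.mem_iff_getElem.mp hy
    have hmlt : m < 17 ^ (d * r) := lt_of_lt_of_le hm (by
      rw [Finset.length_toList]; exact hTXcard)
    exact ⟨⟨m, hmlt⟩, by simp only [hU]; rw [List.getD_eq_getElem _ _ hm]; exact hmy⟩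
  have hVcov : ∀ y ∈ TY, ∃ j, V j = y := by
    intro y hy
    rw [← Finset.mem_toList] at hy
    obtain ⟨m, hm, hmy⟩ := List.mem_iff_getElem.mp hy
    have hmlt : m < 17 ^ (d' * r) := lt_of_lt_of_le hm (by
      rw [Finset.length_toList]; exact hTYcard)
    exact ⟨⟨m, hmlt⟩, by simp only [hV]; rw [List.getD_eq_getElem _ _ hm]; exact hmy⟩
  refine ⟨U, V, hUnorm, hVnorm, ?_⟩
  intro F _ _ f M hM hrank
  obtain ⟨A, B, hA1, hB1, hMAB⟩ := exists_decomp' M hM hrank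
  -- continuity of the bilinear product map
  have hbil : IsBoundedBilinearMap ℝ
      (fun p : Matrix (Fin d) (Fin r) ℝ × Matrix (Fin d') (Fin r) ℝ => p.1 * p.2ᵀ) := by
    refine ⟨fun x₁ x₂ y => by simp [Matrix.add_mul], fun c x y => by simp [Matrix.smul_mul],
      fun x y₁ y₂ => by simp [Matrix.transpose_add, Matrix.mul_add],
      fun c x y => by simp [Matrix.transpose_smul, Matrix.mul_smul],
      ⟨1, one_pos, fun x y => ?_⟩⟩
    have h1 : ‖x * yᵀ‖ ≤ ‖x‖ * ‖yᵀ‖ := Matrix.l2_opNorm_mul _ _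
    have h2 : ‖yᵀ‖ = ‖y‖ := by
      rw [← Matrix.conjTranspose_eq_transpose_of_trivial, Matrix.l2_opNorm_conjTranspose]
    rw [one_mul]
    rw [h2] at h1
    exact h1
  have hfc : Continuous f := f.continuous_of_finiteDimensional
  set g : Matrix (Fin d) (Fin r) ℝ × Matrix (Fin d') (Fin r) ℝ → ℝ :=
    fun p => ‖f (p.1 * p.2ᵀ)‖ with hg
  have hgc : Continuous g := continuous_norm.comp (hfc.comp hbil.continuous)
  set K : Set (Matrix (Fin d) (Fin r) ℝ × Matrix (Fin d') (Fin r) ℝ) :=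
    closedBall 0 1 ×ˢ closedBall 0 1 with hK
  have hKc : IsCompact K := (isCompact_closedBall _ _).prod (isCompact_closedBall _ _)
  have hKne : K.Nonempty := ⟨(0, 0), by
    constructor <;> exact mem_closedBall_self zero_le_one⟩
  obtain ⟨p₀, hp₀K, hp₀max⟩ := hKc.exists_isMaxOn hKne hgc.continuousOn
  set s := g p₀ with hs
  have hmemK : ∀ (a : Matrix (Fin d) (Fin r) ℝ) (b : Matrix (Fin d') (Fin r) ℝ),
      ‖a‖ ≤ 1 → ‖b‖ ≤ 1 → (a, b) ∈ K := by
    intro a b ha hb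
    exact ⟨mem_closedBall_zero_iff.mpr ha, mem_closedBall_zero_iff.mpr hb⟩
  have hsb : ∀ (a : Matrix (Fin d) (Fin r) ℝ) (b : Matrix (Fin d') (Fin r) ℝ),
      ‖a‖ ≤ 1 → ‖b‖ ≤ 1 → ‖f (a * bᵀ)‖ ≤ s := by
    intro a b ha hb
    exact hp₀max (hmemK a b ha hb)
  have hp₀1 : ‖p₀.1‖ ≤ 1 := mem_closedBall_zero_iff.mp hp₀K.1
  have hp₀2 : ‖p₀.2‖ ≤ 1 := mem_closedBall_zero_iff.mp hp₀K.2
  have hfM : ‖f M‖ ≤ s := by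
    rw [hMAB]
    exact hsb A B hA1 hB1
  obtain ⟨a, haT, ha8⟩ := hTXnet p₀.1 hp₀1
  obtain ⟨bb, hbT, hb8⟩ := hTYnet p₀.2 hp₀2
  obtain ⟨j, hj⟩ := hUcov a haT
  obtain ⟨j', hj'⟩ := hVcov bb hbT
  refine ⟨j, j', ?_⟩
  subst hj hj'
  -- decomposition of the product
  have hdecomp : p₀.1 * p₀.2ᵀ =
      U j * (V j')ᵀ + (p₀.1 - U j) * p₀.2ᵀ + U j * (p₀.2 - V j')ᵀ := by
    rw [Matrix.transpose_sub, Matrix.sub_mul, Matrix.mul_sub]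
    abel
  have hterm1 : ‖f ((p₀.1 - U j) * p₀.2ᵀ)‖ ≤ s / 8 := by
    have hkey : (p₀.1 - U j) * p₀.2ᵀ = (8 : ℝ)⁻¹ • (((8 : ℝ) • (p₀.1 - U j)) * p₀.2ᵀ) := by
      rw [Matrix.smul_mul, smul_smul]
      norm_num
    rw [hkey, _root_.map_smul, norm_smul]
    have h8 : ‖((8 : ℝ) • (p₀.1 - U j))‖ ≤ 1 := by
      rw [norm_smul]
      have : ‖p₀.1 - U j‖ ≤ 1/8 := ha8
      rw [Real.norm_eq_abs]
      have h8' : |(8:ℝ)| = 8 := by norm_num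
      rw [h8']
      linarith
    have := hsb _ _ h8 hp₀2
    rw [Real.norm_eq_abs]
    have : |(8:ℝ)⁻¹| = 8⁻¹ := by norm_num
    rw [this]
    have h88 := hsb _ _ h8 hp₀2
    rw [inv_eq_one_div]
    rw [div_mul_eq_mul_div, div_le_div_iff₀ (by norm_num) (by norm_num)]
    linarith
  have hterm2 : ‖f (U j * (p₀.2 - V j')ᵀ)‖ ≤ s / 8 := by
    have hkey : U j * (p₀.2 - V j')ᵀ = (8 : ℝ)⁻¹ • (U j * ((8 : ℝ) • (p₀.2 - V j'))ᵀ) := by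
      rw [Matrix.transpose_smul, Matrix.mul_smul, smul_smul]
      norm_num
    rw [hkey, _root_.map_smul, norm_smul]
    have h8 : ‖((8 : ℝ) • (p₀.2 - V j'))‖ ≤ 1 := by
      rw [norm_smul]
      have : ‖p₀.2 - V j'‖ ≤ 1/8 := hb8
      rw [Real.norm_eq_abs]
      have h8' : |(8:ℝ)| = 8 := by norm_num
      rw [h8']
      linarith
    have h88 := hsb _ _ (hUnorm j) h8
    rw [Real.norm_eq_abs]
    have : |(8:ℝ)⁻¹| = 8⁻¹ := by norm_num
    rw [this]
    rw [inv_eq_one_div]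
    rw [div_mul_eq_mul_div, div_le_div_iff₀ (by norm_num) (by norm_num)]
    linarith
  have hval : s = ‖f (U j * (V j')ᵀ) + f ((p₀.1 - U j) * p₀.2ᵀ) + f (U j * (p₀.2 - V j')ᵀ)‖ := by
    show ‖f (p₀.1 * p₀.2ᵀ)‖ = _
    rw [hdecomp, map_add, map_add]
  have hsplit : s ≤ ‖f (U j * (V j')ᵀ)‖ + s / 8 + s / 8 := by
    calc s = ‖f (U j * (V j')ᵀ) + f ((p₀.1 - U j) * p₀.2ᵀ) + f (U j * (p₀.2 - V j')ᵀ)‖ := hval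
      _
        ≤ ‖f (U j * (V j')ᵀ) + f ((p₀.1 - U j) * p₀.2ᵀ)‖ + ‖f (U j * (p₀.2 - V j')ᵀ)‖ :=
          norm_add_le _ _
      _ ≤ ‖f (U j * (V j')ᵀ)‖ + ‖f ((p₀.1 - U j) * p₀.2ᵀ)‖ + ‖f (U j * (p₀.2 - V j')ᵀ)‖ := by
          have := norm_add_le (f (U j * (V j')ᵀ)) (f ((p₀.1 - U j) * p₀.2ᵀ))
          linarith
      _ ≤ ‖f (U j * (V j')ᵀ)‖ + s / 8 + s / 8 := by linarith
  have hfnn : (0:ℝ) ≤ ‖f (U j * (V j')ᵀ)‖ := norm_nonneg _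
  linarith
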